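/- Let A ∈ ℝ^{n×n}, B ∈ ℝ^{n×m}, C ∈ ℝ^{p×n}, E ∈ ℝ^{n×r}, and let U_p ∈ ℝ^{m×N}, D_p ∈ ℝ^{r×N}, X_p, X_f ∈ ℝ^{n×N}, Y_f ∈ ℝ^{p×N} satisfy X_f = A·X_p + B·U_p + E·D_p and Y_f = C·X_f. Assume the stacked (m+r+n)×N matrix [U_p; D_p; X_p] has full row rank m+r+n. Then the matrix [C·B C·E] has rank m + r if and only if the stacked (n+p)×N matrix [X_p; Y_f] has rank n + r + m. -/

import Mathlib

open Matrix

section Aux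

variable {R : Type*} [CommRing R]

/-- Equivalence between a product submodule and the product of submodules. -/
noncomputable def prodSubEquiv {M N : Type*} [AddCommGroup M] [AddCommGroup N]
    [Module R M] [Module R N] (p : Submodule R M) (q : Submodule R N) :
    (p.prod q) ≃ₗ[R] p × q where
  toFun x := (⟨x.1.1, x.2.1⟩, ⟨x.1.2, x.2.2⟩)
  invFun y := ⟨(y.1.1, y.2.1), ⟨y.1.2, y.2.2⟩⟩
  map_add' _ _ := rfl
  map_smul' _ _ := rfl
  left_inv _ := rfl
  right_inv _ := rfl

lemma range_prodMap' {M M₂ M₃ M₄ : Type*} [AddCommGroup M] [AddCommGroup M₂]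
    [AddCommGroup M₃] [AddCommGroup M₄] [Module R M] [Module R M₂] [Module R M₃] [Module R M₄]
    (f : M →ₗ[R] M₂) (g : M₃ →ₗ[R] M₄) :
    LinearMap.range (f.prodMap g) = (LinearMap.range f).prod (LinearMap.range g) := by
  ext ⟨y₁, y₂⟩
  constructor
  · rintro ⟨⟨x₁, x₂⟩, h⟩
    exact ⟨⟨x₁, congrArg Prod.fst h⟩, ⟨x₂, congrArg Prod.snd h⟩⟩
  · rintro ⟨⟨x₁, h₁⟩, ⟨x₂, h₂⟩⟩
    exact ⟨(x₁, x₂), Prod.ext h₁ h₂⟩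

lemma finrank_prod_sub {M N : Type*} [AddCommGroup M] [AddCommGroup N]
    [Module ℝ M] [Module ℝ N] [FiniteDimensional ℝ M] [FiniteDimensional ℝ N]
    (p : Submodule ℝ M) (q : Submodule ℝ N) :
    Module.finrank ℝ (p.prod q) = Module.finrank ℝ p + Module.finrank ℝ q := by
  rw [(prodSubEquiv p q).finrank_eq, Module.finrank_prod]

/-- Rank of an antidiagonal block matrix. -/
lemma rank_fromBlocks_antidiag {m₁ m₂ n₁ n₂ : Type*} [Fintype m₁] [Fintype m₂]
    [Fintype n₁] [Fintype n₂] [DecidableEq n₁] [DecidableEq n₂]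
    (B : Matrix m₁ n₂ ℝ) (C : Matrix m₂ n₁ ℝ) :
    (fromBlocks 0 B C 0).rank = B.rank + C.rank := by
  have hcomp : (fromBlocks (0 : Matrix m₁ n₁ ℝ) B C 0).mulVecLin
      = (LinearEquiv.sumArrowLequivProdArrow m₁ m₂ ℝ ℝ).symm.toLinearMap ∘ₗ
        ((B.mulVecLin.prodMap C.mulVecLin) ∘ₗ
          ((LinearEquiv.sumArrowLequivProdArrow n₁ n₂ ℝ ℝ).trans
            (LinearEquiv.prodComm ℝ _ _)).toLinearMap) := by
    apply LinearMap.ext; intro v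
    have hv : fromBlocks (0 : Matrix m₁ n₁ ℝ) B C 0 *ᵥ v =
        Sum.elim ((0 : Matrix m₁ n₁ ℝ) *ᵥ (v ∘ Sum.inl) + B *ᵥ (v ∘ Sum.inr))
          (C *ᵥ (v ∘ Sum.inl) + (0 : Matrix m₂ n₂ ℝ) *ᵥ (v ∘ Sum.inr)) :=
      fromBlocks_mulVec _ _ _ _ v
    funext i
    cases i with
    | inl i =>
        simp [Matrix.mulVecLin_apply, hv, LinearEquiv.sumArrowLequivProdArrow,
          Equiv.sumArrowEquivProdArrow, LinearMap.prodMap_apply, LinearEquiv.prodComm]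
        rfl
    | inr i =>
        simp [Matrix.mulVecLin_apply, hv, LinearEquiv.sumArrowLequivProdArrow,
          Equiv.sumArrowEquivProdArrow, LinearMap.prodMap_apply, LinearEquiv.prodComm]
        rfl
  rw [Matrix.rank, Matrix.rank, Matrix.rank, hcomp, LinearMap.range_comp,
    LinearMap.range_comp_of_range_eq_top _ (LinearEquiv.range _),
    range_prodMap', LinearEquiv.finrank_map_eq, finrank_prod_sub]

/-- If the right factor has full row rank then multiplication preserves rank. -/
lemma rank_mul_of_surjective {ι κ N' : Type*} [Fintype ι] [Fintype κ] [Fintype N']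
    (G : Matrix κ ι ℝ) (M : Matrix ι N' ℝ)
    (hM : Function.Surjective M.mulVecLin) : (G * M).rank = G.rank := by
  rw [Matrix.rank, Matrix.rank, Matrix.mulVecLin_mul,
    LinearMap.range_comp_of_range_eq_top _ (LinearMap.range_eq_top.mpr hM)]

end Aux

/-- Under the persistence-of-excitation assumption, rank [C·B  C·E] = m + r
is equivalent to the data-based rank condition on [X_p; Y_f]. -/
theorem stmt_9 {n m p r N : ℕ}
    (A : Matrix (Fin n) (Fin n) ℝ) (B : Matrix (Fin n) (Fin m) ℝ)
    (C : Matrix (Fin p) (Fin n) ℝ) (E : Matrix (Fin n) (Fin r) ℝ)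
    (U_p : Matrix (Fin m) (Fin N) ℝ) (D_p : Matrix (Fin r) (Fin N) ℝ)
    (X_p X_f : Matrix (Fin n) (Fin N) ℝ) (Y_f : Matrix (Fin p) (Fin N) ℝ)
    (hdata : X_f = A * X_p + B * U_p + E * D_p)
    (hYf : Y_f = C * X_f)
    (hFRR : (Matrix.fromRows U_p (Matrix.fromRows D_p X_p)).rank = m + r + n) :
    (Matrix.fromCols (C * B) (C * E)).rank = m + r ↔
      (Matrix.fromRows X_p Y_f).rank = n + r + m := by
  classical
  -- the stacked data matrix with regrouped rows
  set M : Matrix ((Fin m ⊕ Fin r) ⊕ Fin n) (Fin N) ℝ :=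
    fromRows (fromRows U_p D_p) X_p with hM
  -- M has surjective mulVecLin
  have hsurj0 : Function.Surjective (fromRows U_p (fromRows D_p X_p)).mulVecLin := by
    rw [← LinearMap.range_eq_top]
    apply Submodule.eq_top_of_finrank_eq
    rw [← Matrix.rank, hFRR, Module.finrank_pi]
    simp [add_assoc]
  have hsurj : Function.Surjective M.mulVecLin := by
    intro w
    obtain ⟨v, hv⟩ := hsurj0 (w ∘ (Equiv.sumAssoc (Fin m) (Fin r) (Fin n)).symm)
    refine ⟨v, ?_⟩
    have hv' := congrFun hv
    funext i
    rcases i with (i | i) | i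
    · have := hv' (Sum.inl i)
      simpa [Matrix.mulVecLin_apply, Matrix.fromRows_mulVec, Equiv.sumAssoc, hM] using this
    · have := hv' (Sum.inr (Sum.inl i))
      simpa [Matrix.mulVecLin_apply, Matrix.fromRows_mulVec, Equiv.sumAssoc, hM] using this
    · have := hv' (Sum.inr (Sum.inr i))
      simpa [Matrix.mulVecLin_apply, Matrix.fromRows_mulVec, Equiv.sumAssoc, hM] using this
  -- the coefficient matrix
  set F : Matrix (Fin p) (Fin m ⊕ Fin r) ℝ := fromCols (C * B) (C * E) with hF
  set G : Matrix (Fin n ⊕ Fin p) ((Fin m ⊕ Fin r) ⊕ Fin n) ℝ :=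
    fromBlocks 0 1 F (C * A) with hG
  have hfact : fromRows X_p Y_f = G * M := by
    rw [hG, hM]
    rw [show (fromBlocks (0 : Matrix (Fin n) (Fin m ⊕ Fin r) ℝ) 1 F (C * A)) =
      fromRows (fromCols 0 1) (fromCols F (C * A)) from rfl]
    rw [Matrix.fromRows_mul, Matrix.fromCols_mul_fromRows, Matrix.fromCols_mul_fromRows]
    rw [hF, Matrix.fromCols_mul_fromRows]
    have hC : C * (A * X_p + B * U_p + E * D_p) = C * B * U_p + C * E * D_p + C * A * X_p := by
      rw [Matrix.mul_add, Matrix.mul_add, ← Matrix.mul_assoc, ← Matrix.mul_assoc,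
        ← Matrix.mul_assoc]
      abel
    simp only [Matrix.zero_mul, Matrix.one_mul, zero_add]
    rw [hYf, hdata, hC]
  have hrankG : (fromRows X_p Y_f).rank = G.rank := by
    rw [hfact]; exact rank_mul_of_surjective _ _ hsurj
  -- row operation
  set L : Matrix (Fin n ⊕ Fin p) (Fin n ⊕ Fin p) ℝ :=
    fromBlocks 1 0 (-(C * A)) 1 with hL
  have hLdet : IsUnit L.det := by
    rw [hL, Matrix.det_fromBlocks_zero₁₂]
    simp
  have hLG : L * G = fromBlocks 0 1 F 0 := by
    rw [hL, hG, Matrix.fromBlocks_multiply]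
    congr 1 <;> simp
  have hrank2 : G.rank = (fromBlocks (0 : Matrix (Fin n) (Fin m ⊕ Fin r) ℝ)
      (1 : Matrix (Fin n) (Fin n) ℝ) F (0 : Matrix (Fin p) (Fin n) ℝ)).rank := by
    rw [← hLG, Matrix.rank_mul_eq_right_of_isUnit_det L G hLdet]
  have hfinal : (fromRows X_p Y_f).rank = n + F.rank := by
    rw [hrankG, hrank2, rank_fromBlocks_antidiag, Matrix.rank_one, Fintype.card_fin]
  rw [hfinal]
  omega
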